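/- For the Bayes discriminant in the set classification model, the conditional class-1 probability satisfies the logit identity: log(η/(1-η)) = log(π_1/π_2) + m(β_0 + x̄^Tβ + (1/2)x̄^T∇x̄ + (1/2)tr(∇S)), where η = P(Y = 1 | M = m, X_1 = x_1,..., X_m = x_m) under the generative model with Y ⫫ M, priors π_1, π_2, and conditional i.i.d. Gaussian observations. -/

import Mathlib

open Matrix BigOperators Real

/-- Density of the multivariate normal N(μ, Σ) with Σ positive definite. -/
noncomputable def gdens {p : ℕ} (μ : Fin p → ℝ) (Sg : Matrix (Fin p) (Fin p) ℝ)
    (x : Fin p → ℝ) : ℝ :=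
  (2 * Real.pi) ^ (-(p : ℝ) / 2) * Sg.det ^ (-(1 : ℝ) / 2) *
    Real.exp (-(1 / 2) * ((x - μ) ⬝ᵥ (Sg⁻¹ *ᵥ (x - μ))))

lemma aux_swap {p : ℕ} (A : Matrix (Fin p) (Fin p) ℝ) (hA : Aᵀ = A) (u v : Fin p → ℝ) :
    u ⬝ᵥ (A *ᵥ v) = v ⬝ᵥ (A *ᵥ u) := by
  conv_lhs => rw [dotProduct_mulVec, ← hA, vecMul_transpose]
  rw [dotProduct_comm]

lemma aux_sum_dot {p m : ℕ} (f : Fin m → Fin p → ℝ) (w : Fin p → ℝ) :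
    ∑ j, (f j ⬝ᵥ w) = (∑ j, f j) ⬝ᵥ w := by
  simp only [dotProduct, Finset.sum_apply, Finset.sum_mul]
  rw [Finset.sum_comm]

lemma aux_expand {p : ℕ} (A : Matrix (Fin p) (Fin p) ℝ) (hA : Aᵀ = A) (u w : Fin p → ℝ) :
    (u - w) ⬝ᵥ (A *ᵥ (u - w)) =
      u ⬝ᵥ (A *ᵥ u) - 2 * (u ⬝ᵥ (A *ᵥ w)) + w ⬝ᵥ (A *ᵥ w) := by
  rw [mulVec_sub, sub_dotProduct, dotProduct_sub, dotProduct_sub, aux_swap A hA w u]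
  ring

lemma aux_sumQ {p m : ℕ} (hm : 0 < m) (A : Matrix (Fin p) (Fin p) ℝ) (hA : Aᵀ = A)
    (μ : Fin p → ℝ) (x : Fin m → Fin p → ℝ) (xbar : Fin p → ℝ)
    (hxbar : xbar = fun a => (∑ j, x j a) / m) :
    ∑ j, ((x j - μ) ⬝ᵥ (A *ᵥ (x j - μ))) =
      m * ((xbar - μ) ⬝ᵥ (A *ᵥ (xbar - μ)))
        + ∑ j, ((x j - xbar) ⬝ᵥ (A *ᵥ (x j - xbar))) := by
  have hm' : (m : ℝ) ≠ 0 := Nat.cast_ne_zero.mpr hm.ne'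
  have h0 : (∑ j, (x j - xbar)) = 0 := by
    funext a
    simp only [Finset.sum_apply, Pi.sub_apply, Pi.zero_apply, Finset.sum_sub_distrib,
      hxbar, Finset.sum_const, Finset.card_univ, Fintype.card_fin, nsmul_eq_mul]
    field_simp
    ring
  have step : ∀ j : Fin m, (x j - μ) ⬝ᵥ (A *ᵥ (x j - μ)) =
      (x j - xbar) ⬝ᵥ (A *ᵥ (x j - xbar))
        + 2 * ((x j - xbar) ⬝ᵥ (A *ᵥ (xbar - μ)))
        + (xbar - μ) ⬝ᵥ (A *ᵥ (xbar - μ)) := by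
    intro j
    have hx : x j - μ = (x j - xbar) + (xbar - μ) := by
      funext a; simp [Pi.sub_apply]
    rw [hx, mulVec_add, add_dotProduct, dotProduct_add, dotProduct_add,
      aux_swap A hA (xbar - μ) (x j - xbar)]
    ring
  calc ∑ j, ((x j - μ) ⬝ᵥ (A *ᵥ (x j - μ)))
      = ∑ j, ((x j - xbar) ⬝ᵥ (A *ᵥ (x j - xbar)))
        + ∑ j, 2 * ((x j - xbar) ⬝ᵥ (A *ᵥ (xbar - μ)))
        + ∑ _j : Fin m, ((xbar - μ) ⬝ᵥ (A *ᵥ (xbar - μ))) := by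
        simp only [step, Finset.sum_add_distrib]
    _ = m * ((xbar - μ) ⬝ᵥ (A *ᵥ (xbar - μ)))
        + ∑ j, ((x j - xbar) ⬝ᵥ (A *ᵥ (x j - xbar))) := by
        rw [← Finset.mul_sum, aux_sum_dot (fun j => x j - xbar), h0, zero_dotProduct,
          Finset.sum_const, Finset.card_univ, Fintype.card_fin, nsmul_eq_mul]
        ring

lemma aux_trace {p m : ℕ} (hm : 0 < m) (nab : Matrix (Fin p) (Fin p) ℝ)
    (x : Fin m → Fin p → ℝ) (xbar : Fin p → ℝ)
    (S : Matrix (Fin p) (Fin p) ℝ)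
    (hS : S = Matrix.of fun a b => (∑ j, (x j a - xbar a) * (x j b - xbar b)) / m) :
    (m : ℝ) * (nab * S).trace = ∑ j, ((x j - xbar) ⬝ᵥ (nab *ᵥ (x j - xbar))) := by
  have hm' : (m : ℝ) ≠ 0 := Nat.cast_ne_zero.mpr hm.ne'
  have lhs_eq : (m : ℝ) * (nab * S).trace
      = ∑ a, ∑ b, nab a b * ∑ j, (x j b - xbar b) * (x j a - xbar a) := by
    simp only [trace, diag, Matrix.mul_apply, hS, Matrix.of_apply]
    rw [Finset.mul_sum]
    refine Finset.sum_congr rfl fun a _ => ?_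
    rw [Finset.mul_sum]
    refine Finset.sum_congr rfl fun b _ => ?_
    field_simp
  have rhs_eq : ∑ j, ((x j - xbar) ⬝ᵥ (nab *ᵥ (x j - xbar)))
      = ∑ j, ∑ a, ∑ b, nab a b * ((x j b - xbar b) * (x j a - xbar a)) := by
    simp only [dotProduct, mulVec, Pi.sub_apply, Finset.mul_sum]
    exact Finset.sum_congr rfl fun j _ => Finset.sum_congr rfl fun a _ =>
      Finset.sum_congr rfl fun b _ => by ring
  rw [lhs_eq, rhs_eq]
  conv_rhs => rw [Finset.sum_comm]
  refine Finset.sum_congr rfl fun a _ => ?_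
  simp only [Finset.mul_sum]
  exact Finset.sum_comm ..


lemma gdens_pos {p : ℕ} (μ : Fin p → ℝ) (Sg : Matrix (Fin p) (Fin p) ℝ)
    (x : Fin p → ℝ) (h : 0 < Sg.det) : 0 < gdens μ Sg x := by
  unfold gdens
  exact mul_pos (mul_pos (Real.rpow_pos_of_pos (by positivity) _)
    (Real.rpow_pos_of_pos h _)) (Real.exp_pos _)

lemma log_gdens {p : ℕ} (μ : Fin p → ℝ) (Sg : Matrix (Fin p) (Fin p) ℝ)
    (x : Fin p → ℝ) (h : 0 < Sg.det) :
    Real.log (gdens μ Sg x) = (-(p : ℝ) / 2) * Real.log (2 * Real.pi)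
      + (-(1 : ℝ) / 2) * Real.log Sg.det
      + (-(1 / 2) * ((x - μ) ⬝ᵥ (Sg⁻¹ *ᵥ (x - μ)))) := by
  have h2π : (0 : ℝ) < 2 * Real.pi := by positivity
  have ha : (0:ℝ) < (2 * Real.pi) ^ (-(p : ℝ) / 2) := Real.rpow_pos_of_pos h2π _
  have hb : (0:ℝ) < Sg.det ^ (-(1 : ℝ) / 2) := Real.rpow_pos_of_pos h _
  unfold gdens
  rw [Real.log_mul (mul_pos ha hb).ne' (Real.exp_pos _).ne', Real.log_mul ha.ne' hb.ne',
    Real.log_rpow h2π, Real.log_rpow h, Real.log_exp]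


/-- Logit identity for the conditional class-1 probability η (computed by the
Bayes formula under the generative model with Y ⫫ M and conditionally i.i.d.
Gaussian observations):
log(η/(1-η)) = log(π₁/π₂) + m(β₀ + x̄ᵀβ + (1/2)x̄ᵀ∇x̄ + (1/2)tr(∇S)). -/
theorem stmt17 {p m : ℕ} (hm : 0 < m) (π1 π2 : ℝ)
    (hπ1 : 0 < π1) (hπ2 : 0 < π2) (hsum : π1 + π2 = 1)
    (pM : ℕ → ℝ) (hpM : 0 < pM m)
    (μ1 μ2 : Fin p → ℝ) (S1 S2 : Matrix (Fin p) (Fin p) ℝ)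
    (h1 : S1.PosDef) (h2 : S2.PosDef)
    (x : Fin m → Fin p → ℝ)
    (xbar : Fin p → ℝ) (hxbar : xbar = fun a => (∑ j, x j a) / m)
    (S : Matrix (Fin p) (Fin p) ℝ)
    (hS : S = Matrix.of fun a b => (∑ j, (x j a - xbar a) * (x j b - xbar b)) / m)
    (β0 : ℝ)
    (hβ0 : β0 = (1 / 2) * (-Real.log (S1.det / S2.det)
      - μ1 ⬝ᵥ (S1⁻¹ *ᵥ μ1) + μ2 ⬝ᵥ (S2⁻¹ *ᵥ μ2)))
    (β : Fin p → ℝ) (hβ : β = S1⁻¹ *ᵥ μ1 - S2⁻¹ *ᵥ μ2)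
    (nab : Matrix (Fin p) (Fin p) ℝ) (hnab : nab = S2⁻¹ - S1⁻¹)
    (η : ℝ)
    (hη : η = (π1 * pM m * ∏ j, gdens μ1 S1 (x j)) /
      (π1 * pM m * ∏ j, gdens μ1 S1 (x j)
        + π2 * pM m * ∏ j, gdens μ2 S2 (x j))) :
    Real.log (η / (1 - η)) =
      Real.log (π1 / π2) + m * (β0 + xbar ⬝ᵥ β
        + (1 / 2) * (xbar ⬝ᵥ (nab *ᵥ xbar)) + (1 / 2) * (nab * S).trace) := by
  have hm' : (m : ℝ) ≠ 0 := Nat.cast_ne_zero.mpr hm.ne'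
  have hd1 : 0 < S1.det := h1.det_pos
  have hd2 : 0 < S2.det := h2.det_pos
  have hg1 : ∀ j : Fin m, 0 < gdens μ1 S1 (x j) := fun j => gdens_pos μ1 S1 (x j) hd1
  have hg2 : ∀ j : Fin m, 0 < gdens μ2 S2 (x j) := fun j => gdens_pos μ2 S2 (x j) hd2
  have hA : 0 < ∏ j, gdens μ1 S1 (x j) := Finset.prod_pos fun j _ => hg1 j
  have hB : 0 < ∏ j, gdens μ2 S2 (x j) := Finset.prod_pos fun j _ => hg2 j
  have hsym1 : (S1⁻¹)ᵀ = S1⁻¹ := by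
    have := h1.isHermitian.inv
    simpa [Matrix.IsHermitian, Matrix.conjTranspose_eq_transpose_of_trivial] using this
  have hsym2 : (S2⁻¹)ᵀ = S2⁻¹ := by
    have := h2.isHermitian.inv
    simpa [Matrix.IsHermitian, Matrix.conjTranspose_eq_transpose_of_trivial] using this
  have hD : 0 < π1 * pM m * (∏ j, gdens μ1 S1 (x j))
      + π2 * pM m * (∏ j, gdens μ2 S2 (x j)) := by positivity
  have h1mη : 1 - η = (π2 * pM m * ∏ j, gdens μ2 S2 (x j)) /
      (π1 * pM m * ∏ j, gdens μ1 S1 (x j) + π2 * pM m * ∏ j, gdens μ2 S2 (x j)) := by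
    rw [hη]
    field_simp
    ring
  have hratio : η / (1 - η) =
      (π1 * ∏ j, gdens μ1 S1 (x j)) / (π2 * ∏ j, gdens μ2 S2 (x j)) := by
    rw [h1mη, hη]
    rw [div_div_div_eq]
    rw [div_eq_div_iff (by positivity) (by positivity)]
    ring
  -- main sum identity
  have hQ1 := aux_sumQ hm S1⁻¹ hsym1 μ1 x xbar hxbar
  have hQ2 := aux_sumQ hm S2⁻¹ hsym2 μ2 x xbar hxbar
  have htr := aux_trace hm nab x xbar S hS
  have hTdiff : ∑ j, ((x j - xbar) ⬝ᵥ (S2⁻¹ *ᵥ (x j - xbar)))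
      - ∑ j, ((x j - xbar) ⬝ᵥ (S1⁻¹ *ᵥ (x j - xbar))) = (m : ℝ) * (nab * S).trace := by
    rw [← Finset.sum_sub_distrib, htr]
    exact Finset.sum_congr rfl fun j _ => by rw [hnab, sub_mulVec, dotProduct_sub]
  have hE1 := aux_expand S1⁻¹ hsym1 xbar μ1
  have hE2 := aux_expand S2⁻¹ hsym2 xbar μ2
  have hbdot : xbar ⬝ᵥ β = xbar ⬝ᵥ (S1⁻¹ *ᵥ μ1) - xbar ⬝ᵥ (S2⁻¹ *ᵥ μ2) := by
    rw [hβ, dotProduct_sub]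
  have hndot : xbar ⬝ᵥ (nab *ᵥ xbar) = xbar ⬝ᵥ (S2⁻¹ *ᵥ xbar) - xbar ⬝ᵥ (S1⁻¹ *ᵥ xbar) := by
    rw [hnab, sub_mulVec, dotProduct_sub]
  have hld : Real.log (S1.det / S2.det) = Real.log S1.det - Real.log S2.det :=
    Real.log_div hd1.ne' hd2.ne'
  have hLA : Real.log (∏ j, gdens μ1 S1 (x j)) =
      m * ((-(p : ℝ) / 2) * Real.log (2 * Real.pi))
      + m * ((-(1 : ℝ) / 2) * Real.log S1.det)
      + (-(1 / 2 : ℝ)) * ∑ j, ((x j - μ1) ⬝ᵥ (S1⁻¹ *ᵥ (x j - μ1))) := by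
    rw [Real.log_prod fun j _ => (hg1 j).ne',
      Finset.sum_congr rfl fun j _ => log_gdens μ1 S1 (x j) hd1,
      Finset.sum_add_distrib, Finset.sum_add_distrib, Finset.sum_const, Finset.sum_const,
      Finset.card_univ, Fintype.card_fin, nsmul_eq_mul, nsmul_eq_mul, ← Finset.mul_sum]
  have hLB : Real.log (∏ j, gdens μ2 S2 (x j)) =
      m * ((-(p : ℝ) / 2) * Real.log (2 * Real.pi))
      + m * ((-(1 : ℝ) / 2) * Real.log S2.det)
      + (-(1 / 2 : ℝ)) * ∑ j, ((x j - μ2) ⬝ᵥ (S2⁻¹ *ᵥ (x j - μ2))) := by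
    rw [Real.log_prod fun j _ => (hg2 j).ne',
      Finset.sum_congr rfl fun j _ => log_gdens μ2 S2 (x j) hd2,
      Finset.sum_add_distrib, Finset.sum_add_distrib, Finset.sum_const, Finset.sum_const,
      Finset.card_univ, Fintype.card_fin, nsmul_eq_mul, nsmul_eq_mul, ← Finset.mul_sum]
  have main : Real.log (∏ j, gdens μ1 S1 (x j)) - Real.log (∏ j, gdens μ2 S2 (x j)) =
      m * (β0 + xbar ⬝ᵥ β
        + (1 / 2) * (xbar ⬝ᵥ (nab *ᵥ xbar)) + (1 / 2) * (nab * S).trace) := by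
    rw [hLA, hLB, hQ1, hQ2, hE1, hE2, hβ0, hbdot, hndot, hld]
    linear_combination ((1 : ℝ) / 2) * hTdiff
  rw [hratio, Real.log_div (mul_pos hπ1 hA).ne' (mul_pos hπ2 hB).ne',
    Real.log_mul hπ1.ne' hA.ne', Real.log_mul hπ2.ne' hB.ne', Real.log_div hπ1.ne' hπ2.ne']
  linarith [main]
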